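/- arXiv:2305.02165 — 2 statements merged into one kernel-verified Lean document; each statement's English description precedes it below -/
import Mathlib

section
/- Ergodic rate of linearized PDHG: suppose f and g* are convex and L-smooth, and iterates follow x^{k+1} = x^k - η(∇f(x^k) - Aᵀλ^k), λ^{k+1} = λ^k - η(∇g*(λ^k) + A(2x^{k+1} - x^k)). Then for 0 < η ≤ 1/(L + ‖A‖₂), the ergodic averages satisfy L(x̄^k, λ) - L(x, λ̄^k) ≤ ‖z - z^0‖²_P/(2k) with P = [[ (1/η)I, Aᵀ ], [ A, (1/η)I ]], where L(x, λ) = f(x) - λᵀAx - g*(λ). -/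
open Matrix Finset

/-- The ℓ₂ operator (spectral) norm of a matrix. -/
noncomputable def matrixSpectralNorm {m n : ℕ} (A : Matrix (Fin m) (Fin n) ℝ) : ℝ :=
  ‖LinearMap.toContinuousLinearMap (Matrix.toEuclideanLin A)‖

lemma dot_self_nonneg' {p : ℕ} (v : Fin p → ℝ) : 0 ≤ v ⬝ᵥ v :=
  Finset.sum_nonneg fun _ _ => mul_self_nonneg _

lemma dot_sum_comm' {p : ℕ} (s : Finset ℕ) (c : Fin p → ℝ) (v : ℕ → Fin p → ℝ) :
    ∑ i ∈ s, c ⬝ᵥ v i = c ⬝ᵥ ∑ i ∈ s, v i := by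
  simp only [dotProduct, Finset.sum_apply, Finset.mul_sum]
  exact Finset.sum_comm

lemma spec_bound' {m n : ℕ} (A : Matrix (Fin m) (Fin n) ℝ) (a : Fin n → ℝ) (b : Fin m → ℝ) :
    b ⬝ᵥ (A *ᵥ a) ≤ matrixSpectralNorm A * (Real.sqrt (a ⬝ᵥ a) * Real.sqrt (b ⬝ᵥ b)) := by
  set T := LinearMap.toContinuousLinearMap (Matrix.toEuclideanLin A)
  set a' : EuclideanSpace ℝ (Fin n) := (WithLp.equiv 2 (Fin n → ℝ)).symm a
  set b' : EuclideanSpace ℝ (Fin m) := (WithLp.equiv 2 (Fin m → ℝ)).symm b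
  have h1 : b ⬝ᵥ (A *ᵥ a) = inner ℝ b' (T a') := by
    simp [T, a', b', inner, dotProduct, Matrix.toEuclideanLin_apply, mul_comm]
  have h2 : ‖a'‖ = Real.sqrt (a ⬝ᵥ a) := by
    rw [EuclideanSpace.norm_eq]; congr 1; simp [a', dotProduct, sq]
  have h3 : ‖b'‖ = Real.sqrt (b ⬝ᵥ b) := by
    rw [EuclideanSpace.norm_eq]; congr 1; simp [b', dotProduct, sq]
  calc b ⬝ᵥ (A *ᵥ a) = inner ℝ b' (T a') := h1
    _ ≤ ‖b'‖ * ‖T a'‖ := real_inner_le_norm _ _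
    _ ≤ ‖b'‖ * (‖T‖ * ‖a'‖) := by gcongr; exact T.le_opNorm a'
    _ = matrixSpectralNorm A * (Real.sqrt (a ⬝ᵥ a) * Real.sqrt (b ⬝ᵥ b)) := by
        rw [h2, h3, matrixSpectralNorm]; ring

lemma coercive' {m n : ℕ} (A : Matrix (Fin m) (Fin n) ℝ) (η Lc : ℝ) (hLc : 0 ≤ Lc)
    (hη : 0 < η) (hηA : η ≤ 1 / (Lc + matrixSpectralNorm A))
    (u : Fin n → ℝ) (w : Fin m → ℝ) :
    Lc * (u ⬝ᵥ u + w ⬝ᵥ w) ≤ (1/η) * (u ⬝ᵥ u + w ⬝ᵥ w) + 2 * (w ⬝ᵥ (A *ᵥ u)) := by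
  set N := matrixSpectralNorm A with hN
  have hN0 : 0 ≤ N := norm_nonneg _
  have hpos : 0 < Lc + N := by
    by_contra h
    push_neg at h
    have : Lc + N = 0 := le_antisymm h (by positivity)
    rw [this] at hηA
    simp at hηA
    linarith
  have hinv : Lc + N ≤ 1/η := by
    rw [le_div_iff₀ hη]
    rw [le_div_iff₀ hpos] at hηA
    linarith
  have hsb : -(w ⬝ᵥ (A *ᵥ u)) ≤ N * (Real.sqrt (u ⬝ᵥ u) * Real.sqrt (w ⬝ᵥ w)) := by
    have h := spec_bound' A (-u) w
    have e1 : (-u) ⬝ᵥ (-u) = u ⬝ᵥ u := by rw [neg_dotProduct, dotProduct_neg, neg_neg]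
    have e2 : w ⬝ᵥ (A *ᵥ (-u)) = -(w ⬝ᵥ (A *ᵥ u)) := by rw [Matrix.mulVec_neg, dotProduct_neg]
    rw [e1, e2] at h
    exact h
  have hs : 0 ≤ u ⬝ᵥ u := dot_self_nonneg' u
  have ht : 0 ≤ w ⬝ᵥ w := dot_self_nonneg' w
  have hamgm : 2 * (Real.sqrt (u ⬝ᵥ u) * Real.sqrt (w ⬝ᵥ w)) ≤ u ⬝ᵥ u + w ⬝ᵥ w := by
    nlinarith [sq_nonneg (Real.sqrt (u ⬝ᵥ u) - Real.sqrt (w ⬝ᵥ w)), Real.sq_sqrt hs, Real.sq_sqrt ht]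
  nlinarith [mul_le_mul_of_nonneg_left hamgm hN0,
    mul_le_mul_of_nonneg_right hinv (add_nonneg hs ht)]

lemma key_id' {n m : ℕ} (A : Matrix (Fin m) (Fin n) ℝ) (η : ℝ)
    (a a' x : Fin n → ℝ) (b b' lam : Fin m → ℝ) :
    ((1/η) • (a - a') + Aᵀ *ᵥ b) ⬝ᵥ (a' - x)
      + ((1/η) • (b - b') - A *ᵥ (2 • a' - a)) ⬝ᵥ (b' - lam)
      - lam ⬝ᵥ (A *ᵥ a') + b' ⬝ᵥ (A *ᵥ x)
    = (((1/η)*((a - x)⬝ᵥ(a - x)) + (1/η)*((b-lam)⬝ᵥ(b-lam)) + 2*((b-lam)⬝ᵥ(A*ᵥ(a-x))))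
        - ((1/η)*((a' - x)⬝ᵥ(a' - x)) + (1/η)*((b'-lam)⬝ᵥ(b'-lam)) + 2*((b'-lam)⬝ᵥ(A*ᵥ(a'-x)))))/2
      - (1/η) * ((a-a')⬝ᵥ(a-a') + (b-b')⬝ᵥ(b-b')) / 2 - (b-b') ⬝ᵥ (A *ᵥ (a-a')) := by
  have mvd : ∀ (u : Fin n → ℝ) (w : Fin m → ℝ), (A *ᵥ u) ⬝ᵥ w = w ᵥ* A ⬝ᵥ u := fun u w => by
    rw [dotProduct_comm, dotProduct_mulVec]
  have two : (2 : ℕ) • a' = a' + a' := two_smul _ _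
  simp only [two, dotProduct_mulVec, mulVec_transpose, mulVec_sub, mulVec_add,
    sub_vecMul, add_vecMul, dotProduct_sub, dotProduct_add, sub_dotProduct, add_dotProduct,
    smul_dotProduct, dotProduct_smul, smul_sub, smul_eq_mul, mvd,
    dotProduct_comm a' a, dotProduct_comm x a, dotProduct_comm x a',
    dotProduct_comm b' b, dotProduct_comm lam b, dotProduct_comm lam b']
  ring_nf

/-- `O(1/k)` ergodic rate of linearized PDHG with `0 < η ≤ 1/(L + ‖A‖₂)` for
`L(x,λ) = f(x) - λᵀAx - g*(λ)`, `f` and `g*` convex and `L`-smooth. -/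
theorem ergodic_rate_linearized_pdhg {n m : ℕ} (f : (Fin n → ℝ) → ℝ)
    (gs : (Fin m → ℝ) → ℝ) (Df : (Fin n → ℝ) → (Fin n → ℝ))
    (Dg : (Fin m → ℝ) → (Fin m → ℝ)) (Lc : ℝ) (hLc : 0 ≤ Lc)
    (hfconv : ∀ x y, f x + Df x ⬝ᵥ (y - x) ≤ f y)
    (hfsmooth : ∀ x y, f y ≤ f x + Df x ⬝ᵥ (y - x) + (Lc/2) * ((y - x) ⬝ᵥ (y - x)))
    (hgconv : ∀ u v, gs u + Dg u ⬝ᵥ (v - u) ≤ gs v)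
    (hgsmooth : ∀ u v, gs v ≤ gs u + Dg u ⬝ᵥ (v - u) + (Lc/2) * ((v - u) ⬝ᵥ (v - u)))
    (A : Matrix (Fin m) (Fin n) ℝ) (η : ℝ) (hη : 0 < η)
    (hηA : η ≤ 1 / (Lc + matrixSpectralNorm A))
    (L : (Fin n → ℝ) → (Fin m → ℝ) → ℝ)
    (hL : ∀ x lam, L x lam = f x - lam ⬝ᵥ (A *ᵥ x) - gs lam)
    (P : Matrix (Fin n ⊕ Fin m) (Fin n ⊕ Fin m) ℝ)
    (hPdef : P = fromBlocks ((1/η) • (1 : Matrix (Fin n) (Fin n) ℝ)) Aᵀ A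
      ((1/η) • (1 : Matrix (Fin m) (Fin m) ℝ)))
    (xs : ℕ → Fin n → ℝ) (ls : ℕ → Fin m → ℝ)
    (hxupdate : ∀ k, xs (k+1) = xs k - η • (Df (xs k) - Aᵀ *ᵥ ls k))
    (hlupdate : ∀ k, ls (k+1) = ls k - η • (Dg (ls k) + A *ᵥ (2 • xs (k+1) - xs k)))
    (k : ℕ) (hk : 1 ≤ k) (x : Fin n → ℝ) (lam : Fin m → ℝ) :
    L ((k : ℝ)⁻¹ • ∑ i ∈ range k, xs (i+1)) lam
      - L x ((k : ℝ)⁻¹ • ∑ i ∈ range k, ls (i+1))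
      ≤ ((Sum.elim x lam - Sum.elim (xs 0) (ls 0))
          ⬝ᵥ (P *ᵥ (Sum.elim x lam - Sum.elim (xs 0) (ls 0)))) / (2 * k) := by
  have hηne : η ≠ 0 := ne_of_gt hη
  have hkpos : (0:ℝ) < k := by exact_mod_cast Nat.lt_of_lt_of_le Nat.zero_lt_one hk
  have hk0 : (k:ℝ) ≠ 0 := ne_of_gt hkpos
  obtain ⟨D, hD⟩ : ∃ D : ℕ → ℝ, ∀ i, D i = (1/η)*((xs i - x)⬝ᵥ(xs i - x))
      + (1/η)*((ls i - lam)⬝ᵥ(ls i - lam)) + 2*((ls i - lam) ⬝ᵥ (A *ᵥ (xs i - x))) :=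
    ⟨_, fun i => rfl⟩
  -- per-step inequality
  have step : ∀ i, L (xs (i+1)) lam - L x (ls (i+1)) ≤ (D i - D (i+1))/2 := by
    intro i
    have h1 : Df (xs i) = (1/η) • (xs i - xs (i+1)) + Aᵀ *ᵥ ls i := by
      rw [hxupdate i, sub_sub_cancel, smul_smul, one_div, inv_mul_cancel₀ hηne, one_smul,
        sub_add_cancel]
    have h2 : Dg (ls i) = (1/η) • (ls i - ls (i+1)) - A *ᵥ (2 • xs (i+1) - xs i) := by
      rw [hlupdate i, sub_sub_cancel, smul_smul, one_div, inv_mul_cancel₀ hηne, one_smul,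
        add_sub_cancel_right]
    have edot : ∀ {p : ℕ} (u v : Fin p → ℝ), (v - u) ⬝ᵥ (v - u) = (u - v) ⬝ᵥ (u - v) := by
      intro p u v
      rw [show u - v = -(v - u) from (neg_sub _ _).symm, neg_dotProduct,
        dotProduct_neg, neg_neg]
    have hf1 : f (xs (i+1)) - f x ≤ Df (xs i) ⬝ᵥ (xs (i+1) - x)
        + (Lc/2)*((xs i - xs (i+1))⬝ᵥ(xs i - xs (i+1))) := by
      have hA := hfsmooth (xs i) (xs (i+1))
      have hB := hfconv (xs i) x
      have hC : Df (xs i) ⬝ᵥ (xs (i+1) - xs i) - Df (xs i) ⬝ᵥ (x - xs i)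
          = Df (xs i) ⬝ᵥ (xs (i+1) - x) := by
        rw [← dotProduct_sub]
        congr 1
        abel
      rw [← edot (xs i) (xs (i+1))]
      linarith
    have hg1 : gs (ls (i+1)) - gs lam ≤ Dg (ls i) ⬝ᵥ (ls (i+1) - lam)
        + (Lc/2)*((ls i - ls (i+1))⬝ᵥ(ls i - ls (i+1))) := by
      have hA := hgsmooth (ls i) (ls (i+1))
      have hB := hgconv (ls i) lam
      have hC : Dg (ls i) ⬝ᵥ (ls (i+1) - ls i) - Dg (ls i) ⬝ᵥ (lam - ls i)
          = Dg (ls i) ⬝ᵥ (ls (i+1) - lam) := by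
        rw [← dotProduct_sub]
        congr 1
        abel
      rw [← edot (ls i) (ls (i+1))]
      linarith
    have hkey := key_id' A η (xs i) (xs (i+1)) x (ls i) (ls (i+1)) lam
    rw [← h1, ← h2] at hkey
    have hco := coercive' A η Lc hLc hη hηA (xs i - xs (i+1)) (ls i - ls (i+1))
    rw [hL, hL, hD i, hD (i+1)]
    linarith [hf1, hg1, hkey, hco]
  -- telescoping
  have tel : ∑ i ∈ range k, (L (xs (i+1)) lam - L x (ls (i+1))) ≤ D 0 / 2 := by
    have h1 : ∑ i ∈ range k, (L (xs (i+1)) lam - L x (ls (i+1)))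
        ≤ ∑ i ∈ range k, (D i - D (i+1))/2 := Finset.sum_le_sum fun i _ => step i
    have h2 : ∑ i ∈ range k, (D i - D (i+1))/2 = (D 0 - D k)/2 := by
      rw [← Finset.sum_div, Finset.sum_range_sub' D k]
    have h3 : 0 ≤ D k := by
      have hco := coercive' A η Lc hLc hη hηA (xs k - x) (ls k - lam)
      have n1 := dot_self_nonneg' (xs k - x)
      have n2 := dot_self_nonneg' (ls k - lam)
      have n3 : 0 ≤ Lc * ((xs k - x) ⬝ᵥ (xs k - x) + (ls k - lam) ⬝ᵥ (ls k - lam)) :=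
        mul_nonneg hLc (add_nonneg n1 n2)
      rw [hD k]
      linarith
    linarith
  -- Jensen / averaging
  set xb := (k:ℝ)⁻¹ • ∑ i ∈ range k, xs (i+1) with hxb
  set lb := (k:ℝ)⁻¹ • ∑ i ∈ range k, ls (i+1) with hlb
  have hSx : (k:ℝ) • xb = ∑ i ∈ range k, xs (i+1) := by
    rw [hxb, smul_smul, mul_inv_cancel₀ hk0, one_smul]
  have hSl : (k:ℝ) • lb = ∑ i ∈ range k, ls (i+1) := by
    rw [hlb, smul_smul, mul_inv_cancel₀ hk0, one_smul]
  have hfx : (k:ℝ) * f xb ≤ ∑ i ∈ range k, f (xs (i+1)) := by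
    have h1 : ∑ i ∈ range k, (f xb + Df xb ⬝ᵥ (xs (i+1) - xb)) ≤ ∑ i ∈ range k, f (xs (i+1)) :=
      Finset.sum_le_sum fun i _ => hfconv xb (xs (i+1))
    have h3 : ∑ i ∈ range k, Df xb ⬝ᵥ (xs (i+1) - xb) = 0 := by
      simp only [dotProduct_sub]
      rw [Finset.sum_sub_distrib, dot_sum_comm', ← hSx, dotProduct_smul, Finset.sum_const,
        Finset.card_range]
      simp [smul_eq_mul]
    rw [Finset.sum_add_distrib, h3, add_zero, Finset.sum_const, Finset.card_range,
      nsmul_eq_mul] at h1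
    exact h1
  have hgl : (k:ℝ) * gs lb ≤ ∑ i ∈ range k, gs (ls (i+1)) := by
    have h1 : ∑ i ∈ range k, (gs lb + Dg lb ⬝ᵥ (ls (i+1) - lb)) ≤ ∑ i ∈ range k, gs (ls (i+1)) :=
      Finset.sum_le_sum fun i _ => hgconv lb (ls (i+1))
    have h3 : ∑ i ∈ range k, Dg lb ⬝ᵥ (ls (i+1) - lb) = 0 := by
      simp only [dotProduct_sub]
      rw [Finset.sum_sub_distrib, dot_sum_comm', ← hSl, dotProduct_smul, Finset.sum_const,
        Finset.card_range]
      simp [smul_eq_mul]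
    rw [Finset.sum_add_distrib, h3, add_zero, Finset.sum_const, Finset.card_range,
      nsmul_eq_mul] at h1
    exact h1
  have hAx : ∑ i ∈ range k, lam ⬝ᵥ (A *ᵥ xs (i+1)) = (k:ℝ) * (lam ⬝ᵥ (A *ᵥ xb)) := by
    simp only [dotProduct_mulVec]
    rw [dot_sum_comm', ← hSx, dotProduct_smul, smul_eq_mul]
  have hAl : ∑ i ∈ range k, ls (i+1) ⬝ᵥ (A *ᵥ x) = (k:ℝ) * (lb ⬝ᵥ (A *ᵥ x)) := by
    have hc : ∀ i : ℕ, ls (i+1) ⬝ᵥ (A *ᵥ x) = (A *ᵥ x) ⬝ᵥ ls (i+1) := fun i =>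
      dotProduct_comm _ _
    simp only [hc]
    rw [dot_sum_comm', ← hSl, dotProduct_smul, smul_eq_mul, dotProduct_comm]
  have e1 : ∑ i ∈ range k, (L (xs (i+1)) lam - L x (ls (i+1)))
      = (∑ i ∈ range k, f (xs (i+1))) - (∑ i ∈ range k, lam ⬝ᵥ (A *ᵥ xs (i+1)))
        - (k:ℝ) * gs lam - ((k:ℝ) * f x - (∑ i ∈ range k, ls (i+1) ⬝ᵥ (A *ᵥ x))
        - ∑ i ∈ range k, gs (ls (i+1))) := by
    simp only [hL, Finset.sum_sub_distrib, Finset.sum_const, Finset.card_range, nsmul_eq_mul]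
  have main : (k:ℝ) * (L xb lam - L x lb) ≤ D 0 / 2 := by
    rw [hL xb lam, hL x lb]
    have := tel
    rw [e1] at this
    nlinarith [hfx, hgl, hAx, hAl, this]
  have hRHS : (Sum.elim x lam - Sum.elim (xs 0) (ls 0))
      ⬝ᵥ (P *ᵥ (Sum.elim x lam - Sum.elim (xs 0) (ls 0))) = D 0 := by
    have hz : Sum.elim x lam - Sum.elim (xs 0) (ls 0) = Sum.elim (x - xs 0) (lam - ls 0) := by
      funext j
      cases j <;> simp
    rw [hz, hPdef, fromBlocks_mulVec, sumElim_dotProduct_sumElim]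
    simp only [Sum.elim_comp_inl, Sum.elim_comp_inr, smul_mulVec, one_mulVec,
      dotProduct_add, dotProduct_smul, smul_eq_mul]
    have e2 : (x - xs 0) ⬝ᵥ (Aᵀ *ᵥ (lam - ls 0)) = (lam - ls 0) ⬝ᵥ (A *ᵥ (x - xs 0)) := by
      rw [mulVec_transpose, dotProduct_mulVec, dotProduct_comm]
    have e3 : (xs 0 - x) ⬝ᵥ (xs 0 - x) = (x - xs 0) ⬝ᵥ (x - xs 0) := by
      rw [show xs 0 - x = -(x - xs 0) from (neg_sub _ _).symm, neg_dotProduct,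
        dotProduct_neg, neg_neg]
    have e4 : (ls 0 - lam) ⬝ᵥ (ls 0 - lam) = (lam - ls 0) ⬝ᵥ (lam - ls 0) := by
      rw [show ls 0 - lam = -(lam - ls 0) from (neg_sub _ _).symm, neg_dotProduct,
        dotProduct_neg, neg_neg]
    have e5 : (ls 0 - lam) ⬝ᵥ (A *ᵥ (xs 0 - x)) = (lam - ls 0) ⬝ᵥ (A *ᵥ (x - xs 0)) := by
      rw [show ls 0 - lam = -(lam - ls 0) from (neg_sub _ _).symm,
        show xs 0 - x = -(x - xs 0) from (neg_sub _ _).symm, Matrix.mulVec_neg,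
        neg_dotProduct, dotProduct_neg, neg_neg]
    rw [e2, hD 0, e3, e4, e5]
    ring
  rw [hRHS, le_div_iff₀ (by positivity : (0:ℝ) < 2 * k)]
  nlinarith [main]
end

section
/- One-step inexact inequality: if P(z^k - z^{k+1}) + ε^{k+1} ∈ F(z^{k+1}) with P PSD, L convex-concave, and ‖z^{k+1} - z‖₂ ≤ D, then L(x^{k+1}, λ) - L(x, λ^{k+1}) ≤ (1/2)‖z^k - z‖²_P - (1/2)‖z^{k+1} - z‖²_P + D‖ε^{k+1}‖₂. -/
open Matrix

/-- `g` is a subgradient of `f` at `x`. -/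
def IsSubgradAt {ι : Type*} [Fintype ι] (f : (ι → ℝ) → ℝ) (x g : ι → ℝ) : Prop :=
  ∀ y, f x + g ⬝ᵥ (y - x) ≤ f y

/-- Euclidean norm of a vector. -/
noncomputable def evnorm {ι : Type*} [Fintype ι] (u : ι → ℝ) : ℝ := Real.sqrt (u ⬝ᵥ u)

lemma evnorm_nonneg {ι : Type*} [Fintype ι] (u : ι → ℝ) : 0 ≤ evnorm u :=
  Real.sqrt_nonneg _

/-- Cauchy–Schwarz for the dot product. -/
lemma dot_le_evnorm_mul {ι : Type*} [Fintype ι] (u v : ι → ℝ) :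
    u ⬝ᵥ v ≤ evnorm u * evnorm v := by
  have h := Real.sum_mul_le_sqrt_mul_sqrt Finset.univ u v
  simpa [evnorm, dotProduct, sq] using h

/-- One-step inequality for the inexact update `P(z^k - z^{k+1}) + ε^{k+1} ∈ F(z^{k+1})`:
`L(x^{k+1},λ) - L(x,λ^{k+1}) ≤ ½‖z^k-z‖²_P - ½‖z^{k+1}-z‖²_P + D‖ε^{k+1}‖₂`. -/
theorem one_step_inexact {n m : ℕ} (L : (Fin n → ℝ) → (Fin m → ℝ) → ℝ)
    (P : Matrix (Fin n ⊕ Fin m) (Fin n ⊕ Fin m) ℝ) (hP : P.PosSemidef)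
    (xk xk1 : Fin n → ℝ) (lk lk1 : Fin m → ℝ) (eps : Fin n ⊕ Fin m → ℝ)
    (gx : Fin n → ℝ) (gl : Fin m → ℝ)
    (hgx : IsSubgradAt (fun x => L x lk1) xk1 gx)
    (hgl : IsSubgradAt (fun l => -L xk1 l) lk1 gl)
    (hinc : P *ᵥ (Sum.elim xk lk - Sum.elim xk1 lk1) + eps = Sum.elim gx gl)
    (x : Fin n → ℝ) (lam : Fin m → ℝ) (D : ℝ)
    (hD : evnorm (Sum.elim xk1 lk1 - Sum.elim x lam) ≤ D) :
    L xk1 lam - L x lk1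
      ≤ (1/2) * ((Sum.elim xk lk - Sum.elim x lam)
            ⬝ᵥ (P *ᵥ (Sum.elim xk lk - Sum.elim x lam)))
        - (1/2) * ((Sum.elim xk1 lk1 - Sum.elim x lam)
            ⬝ᵥ (P *ᵥ (Sum.elim xk1 lk1 - Sum.elim x lam)))
        + D * evnorm eps := by
  set z := Sum.elim x lam
  set zk := Sum.elim xk lk
  set zk1 := Sum.elim xk1 lk1
  -- symmetry of the bilinear form
  have hsym : ∀ u w : Fin n ⊕ Fin m → ℝ, (P *ᵥ u) ⬝ᵥ w = u ⬝ᵥ (P *ᵥ w) := by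
    intro u w
    have hPt : Pᵀ = P := by
      have := hP.1
      simpa [Matrix.IsHermitian] using this
    calc (P *ᵥ u) ⬝ᵥ w = w ⬝ᵥ (P *ᵥ u) := dotProduct_comm _ _
      _ = (w ᵥ* P) ⬝ᵥ u := dotProduct_mulVec _ _ _
      _ = (P *ᵥ w) ⬝ᵥ u := by rw [← Matrix.mulVec_transpose, hPt]
      _ = u ⬝ᵥ (P *ᵥ w) := dotProduct_comm _ _
  have hsym2 : ∀ u w : Fin n ⊕ Fin m → ℝ, u ⬝ᵥ (P *ᵥ w) = w ⬝ᵥ (P *ᵥ u) := by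
    intro u w
    rw [dotProduct_comm, hsym]
  -- step 1: convex-concave gap bound
  have h1 : L xk1 lam - L x lk1 ≤ (Sum.elim gx gl) ⬝ᵥ (zk1 - z) := by
    have hx := hgx x
    have hl := hgl lam
    simp only at hx hl
    have hdot : (Sum.elim gx gl) ⬝ᵥ (zk1 - z)
        = -(gx ⬝ᵥ (x - xk1)) - gl ⬝ᵥ (lam - lk1) := by
      simp [z, zk1, sumElim_dotProduct_sumElim, dotProduct_sub]
      ring
    rw [hdot]
    linarith
  -- step 2: decompose the inclusion
  have h2 : (Sum.elim gx gl) ⬝ᵥ (zk1 - z)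
      = (P *ᵥ (zk - zk1)) ⬝ᵥ (zk1 - z) + eps ⬝ᵥ (zk1 - z) := by
    rw [← hinc, add_dotProduct]
  -- step 3: three-point identity + PSD
  have hpsd : 0 ≤ (zk - zk1) ⬝ᵥ (P *ᵥ (zk - zk1)) := hP.dotProduct_mulVec_nonneg _
  have h3 : (P *ᵥ (zk - zk1)) ⬝ᵥ (zk1 - z)
      ≤ (1/2) * ((zk - z) ⬝ᵥ (P *ᵥ (zk - z)))
        - (1/2) * ((zk1 - z) ⬝ᵥ (P *ᵥ (zk1 - z))) := by
    have hbil : (P *ᵥ (zk - zk1)) ⬝ᵥ (zk1 - z)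
        = (1/2) * ((zk - z) ⬝ᵥ (P *ᵥ (zk - z)))
          - (1/2) * ((zk1 - z) ⬝ᵥ (P *ᵥ (zk1 - z)))
          - (1/2) * ((zk - zk1) ⬝ᵥ (P *ᵥ (zk - zk1))) := by
      have e1 : zk - zk1 = (zk - z) - (zk1 - z) := by abel
      rw [e1]
      have hs := hsym ((zk - z) - (zk1 - z)) (zk1 - z)
      rw [hs]
      simp only [Matrix.mulVec_sub, dotProduct_sub, sub_dotProduct]
      have hcross : (zk1 - z) ⬝ᵥ (P *ᵥ (zk - z)) = (zk - z) ⬝ᵥ (P *ᵥ (zk1 - z)) := by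
        rw [← hsym, dotProduct_comm]
      rw [hsym2 z zk, hsym2 z zk1, hsym2 zk1 zk]
      ring
    rw [hbil]
    linarith
  -- step 4: Cauchy-Schwarz
  have h4 : eps ⬝ᵥ (zk1 - z) ≤ D * evnorm eps := by
    calc eps ⬝ᵥ (zk1 - z) ≤ evnorm eps * evnorm (zk1 - z) := dot_le_evnorm_mul _ _
      _ ≤ evnorm eps * D := by
          exact mul_le_mul_of_nonneg_left hD (evnorm_nonneg _)
      _ = D * evnorm eps := mul_comm _ _
  linarith [h1, h2.le, h3, h4, h2.ge]
end
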